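/- Let 𝔫 ∈ A be a nonconstant polynomial. Then Γ₁(𝔫) has no nontrivial torsion of order prime to p: if γ ∈ Γ₁(𝔫) satisfies γ^N = 1 for some integer N ≥ 1 not divisible by p, then γ = 1. -/

import Mathlib

open Polynomial Matrix

/-- `Γ₁(𝔫)` as a set of 2×2 matrices over `A = F[t]`:
matrices of determinant 1 congruent to `[[1,*],[0,1]]` mod `𝔫`. -/
def Gamma1 (F : Type*) [Field F] (n : Polynomial F) :
    Set (Matrix (Fin 2) (Fin 2) (Polynomial F)) :=
  {γ | γ.det = 1 ∧ n ∣ γ 1 0 ∧ n ∣ (γ 0 0 - 1) ∧ n ∣ (γ 1 1 - 1)}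

/-- Cayley–Hamilton for 2×2 matrices, by direct computation. -/
lemma CH2 (F : Type*) [Field F] (γ : Matrix (Fin 2) (Fin 2) (Polynomial F)) :
    γ * γ = γ.trace • γ - γ.det • (1 : Matrix (Fin 2) (Fin 2) (Polynomial F)) := by
  ext i j
  fin_cases i <;> fin_cases j <;>
    simp only [Matrix.mul_apply, Fin.sum_univ_two, Matrix.det_fin_two, Matrix.trace_fin_two,
      Matrix.sub_apply, Matrix.smul_apply, Matrix.one_apply, smul_eq_mul, if_true, if_false,
      Fin.zero_eta, Fin.mk_one, one_ne_zero, zero_ne_one, ite_true, ite_false, reduceIte,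
      mul_one, mul_zero] <;> ring_nf

lemma one_add_pow {R : Type*} [Ring R] {n : R} (hn : n * n = 0) (k : ℕ) :
    (1 + n) ^ k = 1 + k • n := by
  induction k with
  | zero => simp
  | succ k ih =>
    rw [pow_succ, ih, add_mul, one_mul, mul_add, mul_one, smul_mul_assoc, hn, smul_zero,
      add_zero, succ_nsmul]
    abel

lemma trace_rec (F : Type*) [Field F] (γ : Matrix (Fin 2) (Fin 2) (Polynomial F))
    (hdet : γ.det = 1) (k : ℕ) :
    (γ ^ (k + 2)).trace = γ.trace * (γ ^ (k + 1)).trace - (γ ^ k).trace := by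
  have h : γ ^ (k + 2) = γ.trace • γ ^ (k + 1) - γ ^ k := by
    have : γ ^ (k + 2) = (γ * γ) * γ ^ k := by
      rw [show k + 2 = 2 + k by omega, pow_add, pow_two]
    rw [this, CH2, hdet, one_smul, sub_mul, one_mul, smul_mul_assoc, ← pow_succ']
  rw [h, Matrix.trace_sub, Matrix.trace_smul, smul_eq_mul]

theorem stmt15 (p : ℕ) (hp : p.Prime) (F : Type*) [Field F] [Fintype F] [CharP F p]
    (𝔫 : Polynomial F) (h𝔫 : 1 ≤ 𝔫.natDegree)
    (γ : Matrix (Fin 2) (Fin 2) (Polynomial F)) (hγ : γ ∈ Gamma1 F 𝔫)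
    (N : ℕ) (hN : 1 ≤ N) (hNp : ¬ p ∣ N) (hγN : γ ^ N = 1) :
    γ = 1 := by
  obtain ⟨hdet, h10, h00, h11⟩ := hγ
  set τ := γ.trace with hτ
  have h2deg : ((2 : Polynomial F)).natDegree = 0 := by
    have h : (2 : Polynomial F) = C (2 : F) := (map_ofNat (C : F →+* Polynomial F) 2).symm
    rw [h, natDegree_C]
  -- Step 1: the trace is a constant polynomial.
  have hτdeg : τ.natDegree = 0 := by
    by_contra hd
    have hd1 : 1 ≤ τ.natDegree := Nat.one_le_iff_ne_zero.mpr hd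
    have hτ0 : τ ≠ 0 := fun h => by simp [h] at hd
    -- claim : traces of powers have strictly growing degree
    have claim : ∀ k : ℕ, (γ ^ (k + 1)).trace ≠ 0 ∧
        ((γ ^ (k + 1)).trace).natDegree = (k + 1) * τ.natDegree := by
      intro k
      induction k using Nat.strong_induction_on with
      | _ k ih =>
        match k with
        | 0 => exact ⟨by simpa using hτ0, by simp [hτ]⟩
        | 1 =>
          have h0 : (γ ^ 2).trace = τ * τ - (2 : Polynomial F) := by
            have h := trace_rec F γ hdet 0
            simp only [zero_add, pow_one, pow_zero, Matrix.trace_one, Fintype.card_fin,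
              Nat.cast_ofNat] at h
            exact h
          have hττ : (τ * τ).natDegree = 2 * τ.natDegree := by
            rw [natDegree_mul hτ0 hτ0]; ring
          have hlt : ((2 : Polynomial F)).natDegree < (τ * τ).natDegree := by
            rw [h2deg, hττ]; omega
          rw [show (1 : ℕ) + 1 = 2 from rfl, h0]
          refine ⟨?_, ?_⟩
          · intro h
            rw [sub_eq_zero] at h
            rw [h] at hlt
            omega
          · rw [natDegree_sub_eq_left_of_natDegree_lt hlt, hττ]
        | (k + 2) =>
          obtain ⟨hA, hdA⟩ := ih (k + 1) (by omega)
          obtain ⟨hB, hdB⟩ := ih k (by omega)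
          rw [show k + 1 + 1 = k + 2 by omega] at hA hdA
          have hrec : (γ ^ (k + 3)).trace
              = τ * (γ ^ (k + 2)).trace - (γ ^ (k + 1)).trace := by
            have h := trace_rec F γ hdet (k + 1)
            rw [show k + 1 + 2 = k + 3 by omega, show k + 1 + 1 = k + 2 by omega] at h
            exact h
          have hdm : (τ * (γ ^ (k + 2)).trace).natDegree = (k + 3) * τ.natDegree := by
            rw [natDegree_mul hτ0 hA, hdA]; ring
          have hlt : ((γ ^ (k + 1)).trace).natDegree
              < (τ * (γ ^ (k + 2)).trace).natDegree := by
            rw [hdm, hdB]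
            have h3 : (k + 3) * τ.natDegree = (k + 1) * τ.natDegree + 2 * τ.natDegree := by
              ring
            omega
          rw [show k + 2 + 1 = k + 3 by omega, hrec]
          refine ⟨?_, ?_⟩
          · intro h
            rw [sub_eq_zero] at h
            rw [h] at hlt
            omega
          · rw [natDegree_sub_eq_left_of_natDegree_lt hlt, hdm]
    obtain ⟨m, rfl⟩ : ∃ m, N = m + 1 := ⟨N - 1, by omega⟩
    obtain ⟨hne, hdeg⟩ := claim m
    rw [hγN] at hdeg
    have h1 : ((1 : Matrix (Fin 2) (Fin 2) (Polynomial F)).trace).natDegree = 0 := by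
      rw [Matrix.trace_one]
      simp [h2deg]
    rw [h1] at hdeg
    rcases Nat.mul_eq_zero.mp hdeg.symm with h | h <;> omega
  -- Step 2: τ = 2.
  have hdvd : 𝔫 ∣ τ - 2 := by
    have : τ - 2 = (γ 0 0 - 1) + (γ 1 1 - 1) := by
      rw [hτ, Matrix.trace_fin_two]; ring
    rw [this]
    exact dvd_add h00 h11
  have hτ2 : τ = 2 := by
    by_contra h
    have hne : τ - 2 ≠ 0 := sub_ne_zero.mpr h
    have hle : 𝔫.natDegree ≤ (τ - 2).natDegree := natDegree_le_of_dvd hdvd hne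
    have hd2 : (τ - 2).natDegree ≤ max τ.natDegree ((2 : Polynomial F)).natDegree :=
      natDegree_sub_le _ _
    rw [hτdeg, h2deg] at hd2
    omega
  -- Step 3: (γ - 1)² = 0.
  have hn2 : (γ - 1) * (γ - 1) = 0 := by
    have hexp : (γ - 1) * (γ - 1) = γ * γ - γ - γ + 1 := by noncomm_ring
    rw [hexp, CH2, ← hτ, hτ2, hdet, one_smul]
    have h2γ : (2 : Polynomial F) • γ = γ + γ := by
      rw [show (2 : Polynomial F) = 1 + 1 by ring, add_smul, one_smul]
    rw [h2γ]
    abel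
  -- Step 4: conclude.
  have hpow := one_add_pow hn2 N
  rw [show (1 : Matrix (Fin 2) (Fin 2) (Polynomial F)) + (γ - 1) = γ by abel] at hpow
  rw [hγN] at hpow
  have hNsmul : N • (γ - 1) = 0 := by
    have h := hpow
    rw [left_eq_add] at h
    exact h
  have hNF : (N : F) ≠ 0 := by
    rw [Ne, CharP.cast_eq_zero_iff F p]
    exact hNp
  have hNpoly : (N : Polynomial F) ≠ 0 := by
    rw [Ne, ← map_natCast (C : F →+* Polynomial F), C_eq_zero]
    exact hNF
  have hsub : γ - 1 = 0 := by
    apply Matrix.ext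
    intro i j
    have h := congrFun (congrFun hNsmul i) j
    simp only [Matrix.smul_apply, Matrix.zero_apply, nsmul_eq_mul] at h
    rcases mul_eq_zero.mp h with h' | h'
    · exact absurd h' hNpoly
    · simpa using h'
  rw [sub_eq_zero] at hsub
  exact hsub
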